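/- For every abstract online covering problem that is (α, γ)-decomposable (α ≥ 1, γ ≥ 1), every finite request set X̂, and every integer i with 1 ≤ i ≤ |X̂|, there exist a set A ⊆ X̂ with |A| ≥ i and a finite solution set T with Feas A T and c(T) ≤ g_{α,γ}(|X̂|) · m_i(X̂). -/

import Mathlib

open Finset

/-- An abstract online covering problem. -/
structure CoveringProblem (X S : Type) [DecidableEq X] [Fintype S] [DecidableEq S] where
  cost : S → ℝ
  cost_nonneg : ∀ s, 0 ≤ cost s
  Feas : Finset X → Finset S → Prop
  feas_union : ∀ A₁ T₁ A₂ T₂, Feas A₁ T₁ → Feas A₂ T₂ → Feas (A₁ ∪ A₂) (T₁ ∪ T₂)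
  feas_mono : ∀ A T A' T', Feas A T → A' ⊆ A → T ⊆ T' → Feas A' T'
  feas_univ : ∀ A, Feas A Finset.univ

variable {X S : Type} [DecidableEq X] [Fintype S] [DecidableEq S]

/-- Cost of a finite set of solution items. -/
def CoveringProblem.setCost (P : CoveringProblem X S) (T : Finset S) : ℝ :=
  ∑ s ∈ T, P.cost s

/-- Cost of a cheapest feasible solution for a finite request set. -/
noncomputable def CoveringProblem.optCost (P : CoveringProblem X S) (A : Finset X) : ℝ :=
  sInf {r : ℝ | ∃ T : Finset S, P.Feas A T ∧ r = P.setCost T}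

/-- A deterministic online algorithm: prefix-monotone (irrevocable purchases) and feasible. -/
def CoveringProblem.IsOnlineAlg (P : CoveringProblem X S) (ALG : List X → Finset S) : Prop :=
  (∀ (σ : List X) (x : X), ALG σ ⊆ ALG (σ ++ [x])) ∧
  ∀ σ : List X, P.Feas σ.toFinset (ALG σ)

/-- ρ-competitiveness on duplicate-free request sequences. -/
def CoveringProblem.IsCompetitive (P : CoveringProblem X S) (ρ : ℕ → ℝ)
    (ALG : List X → Finset S) : Prop :=
  ∀ σ : List X, σ.Nodup → P.setCost (ALG σ) ≤ ρ σ.length * P.optCost σ.toFinset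

/-- The prediction error η(σ) = min(|Xσ|, |Xσ \ X̂| + |X̂ \ Xσ|). -/
def predErr (Xhat : Finset X) (σ : List X) : ℕ :=
  min σ.toFinset.card ((σ.toFinset \ Xhat).card + (Xhat \ σ.toFinset).card)


/-- `m_j(R)`: minimum of `opt(A)` over subsets `A ⊆ R` of cardinality `j`. -/
noncomputable def CoveringProblem.mCost (P : CoveringProblem X S) (R : Finset X) (j : ℕ) : ℝ :=
  sInf {r : ℝ | ∃ A : Finset X, A ⊆ R ∧ A.card = j ∧ r = P.optCost A}

/-- (α, γ)-decomposability. -/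
def CoveringProblem.Decomposable (P : CoveringProblem X S) (α γ : ℝ) : Prop :=
  ∀ (R : Finset X) (i : ℕ), 1 ≤ i → i ≤ R.card →
    ∃ (B : Finset X) (T : Finset S), B ⊆ R ∧ (i : ℝ) / γ ≤ (B.card : ℝ) ∧
      P.Feas B T ∧ P.setCost T ≤ α * P.mCost R i

/-- `g_{α,γ}(t)`. -/
noncomputable def gFun (α γ : ℝ) (t : ℕ) : ℝ :=
  if γ = 1 then α else α * (1 + Real.log t / Real.log (γ / (γ - 1)))

namespace CoveringProblem

variable (P : CoveringProblem X S)

lemma setCost_nonneg' (T : Finset S) : 0 ≤ P.setCost T :=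
  Finset.sum_nonneg fun s _ => P.cost_nonneg s

lemma setCost_union_le' (T₁ T₂ : Finset S) :
    P.setCost (T₁ ∪ T₂) ≤ P.setCost T₁ + P.setCost T₂ := by
  have h : ∑ s ∈ T₁ ∪ T₂, P.cost s + ∑ s ∈ T₁ ∩ T₂, P.cost s
      = ∑ s ∈ T₁, P.cost s + ∑ s ∈ T₂, P.cost s := Finset.sum_union_inter
  have h2 : 0 ≤ ∑ s ∈ T₁ ∩ T₂, P.cost s := Finset.sum_nonneg fun s _ => P.cost_nonneg s
  unfold setCost
  linarith

lemma optCost_setFinite (A : Finset X) :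
    {r : ℝ | ∃ T : Finset S, P.Feas A T ∧ r = P.setCost T}.Finite :=
  (Set.finite_range P.setCost).subset (by rintro r ⟨T, _, rfl⟩; exact ⟨T, rfl⟩)

lemma optCost_setNonempty (A : Finset X) :
    {r : ℝ | ∃ T : Finset S, P.Feas A T ∧ r = P.setCost T}.Nonempty :=
  ⟨P.setCost Finset.univ, Finset.univ, P.feas_univ A, rfl⟩

lemma optCost_le' {A : Finset X} {T : Finset S} (h : P.Feas A T) :
    P.optCost A ≤ P.setCost T :=
  csInf_le (P.optCost_setFinite A).bddBelow ⟨T, h, rfl⟩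

lemma exists_optCost (A : Finset X) :
    ∃ T : Finset S, P.Feas A T ∧ P.optCost A = P.setCost T :=
  (P.optCost_setNonempty A).csInf_mem (P.optCost_setFinite A)

lemma optCost_nonneg' (A : Finset X) : 0 ≤ P.optCost A := by
  obtain ⟨T, _, hT⟩ := P.exists_optCost A
  rw [hT]; exact P.setCost_nonneg' T

lemma optCost_mono' {A' A : Finset X} (h : A' ⊆ A) : P.optCost A' ≤ P.optCost A := by
  obtain ⟨T, hF, hEq⟩ := P.exists_optCost A
  rw [hEq]
  exact P.optCost_le' (P.feas_mono A T A' T hF h (Finset.Subset.refl T))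

lemma mCost_setFinite (R : Finset X) (j : ℕ) :
    {r : ℝ | ∃ A : Finset X, A ⊆ R ∧ A.card = j ∧ r = P.optCost A}.Finite := by
  apply Set.Finite.subset (R.powerset.finite_toSet.image P.optCost)
  rintro r ⟨A, hA, _, rfl⟩
  exact ⟨A, by simpa using hA, rfl⟩

lemma mCost_le' {R A : Finset X} {j : ℕ} (hA : A ⊆ R) (hc : A.card = j) :
    P.mCost R j ≤ P.optCost A :=
  csInf_le (P.mCost_setFinite R j).bddBelow ⟨A, hA, hc, rfl⟩

lemma exists_mCost {R : Finset X} {j : ℕ} (h : j ≤ R.card) :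
    ∃ A : Finset X, A ⊆ R ∧ A.card = j ∧ P.mCost R j = P.optCost A := by
  obtain ⟨A, hA, hc⟩ := Finset.exists_subset_card_eq h
  have hne : {r : ℝ | ∃ A : Finset X, A ⊆ R ∧ A.card = j ∧ r = P.optCost A}.Nonempty :=
    ⟨P.optCost A, A, hA, hc, rfl⟩
  exact hne.csInf_mem (P.mCost_setFinite R j)

lemma mCost_nonneg' {R : Finset X} {j : ℕ} (h : j ≤ R.card) : 0 ≤ P.mCost R j := by
  obtain ⟨A, _, _, hEq⟩ := P.exists_mCost h
  rw [hEq]; exact P.optCost_nonneg' A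

lemma mCost_sdiff_le' {Xhat A : Finset X} {i : ℕ} (hA : A ⊆ Xhat) (hi : i ≤ Xhat.card) :
    P.mCost (Xhat \ A) (i - A.card) ≤ P.mCost Xhat i := by
  obtain ⟨Astar, hsub, hcard, heq⟩ := P.exists_mCost hi
  have h1 : i - A.card ≤ (Astar \ A).card := by
    have := Finset.le_card_sdiff A Astar
    omega
  obtain ⟨A', hA'sub, hA'card⟩ := Finset.exists_subset_card_eq h1
  have hA'R : A' ⊆ Xhat \ A :=
    hA'sub.trans (Finset.sdiff_subset_sdiff hsub (Finset.Subset.refl A))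
  calc P.mCost (Xhat \ A) (i - A.card) ≤ P.optCost A' := P.mCost_le' hA'R hA'card
    _ ≤ P.optCost Astar := P.optCost_mono' (hA'sub.trans Finset.sdiff_subset)
    _ = P.mCost Xhat i := heq.symm

lemma main_step {α γ : ℝ} (hα : 1 ≤ α) (hγ : 1 < γ) (hdec : P.Decomposable α γ)
    (Xhat : Finset X) (i : ℕ) (hi2 : i ≤ Xhat.card) :
    ∀ n : ℕ, ∀ A : Finset X, ∀ T : Finset S, A ⊆ Xhat → P.Feas A T →
      ((i - A.card : ℕ) : ℝ) < (γ / (γ - 1)) ^ n →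
      ∃ A' T', A' ⊆ Xhat ∧ i ≤ A'.card ∧ P.Feas A' T' ∧
        P.setCost T' ≤ P.setCost T + n * (α * P.mCost Xhat i) := by
  have hγ0 : 0 < γ := by linarith
  have hγ1 : 0 < γ - 1 := by linarith
  have hβ : (1:ℝ) < γ / (γ - 1) := by
    rw [lt_div_iff₀ hγ1]; linarith
  have hm : 0 ≤ α * P.mCost Xhat i :=
    mul_nonneg (by linarith) (P.mCost_nonneg' hi2)
  intro n
  induction n with
  | zero =>
    intro A T hAX hF hlt
    simp only [pow_zero] at hlt
    have : i ≤ A.card := by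
      by_contra h
      push_neg at h
      have : 1 ≤ i - A.card := by omega
      have : (1:ℝ) ≤ ((i - A.card : ℕ) : ℝ) := by exact_mod_cast this
      linarith
    exact ⟨A, T, hAX, this, hF, by simp⟩
  | succ n ih =>
    intro A T hAX hF hlt
    by_cases hle : i ≤ A.card
    · refine ⟨A, T, hAX, hle, hF, ?_⟩
      have : (0:ℝ) ≤ ((n:ℝ) + 1) * (α * P.mCost Xhat i) :=
        mul_nonneg (by positivity) hm
      push_cast
      linarith
    · push_neg at hle
      set d := i - A.card with hd
      have hd1 : 1 ≤ d := by omega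
      have hd2 : d ≤ (Xhat \ A).card := by
        rw [Finset.card_sdiff_of_subset hAX]; omega
      obtain ⟨B, TB, hBsub, hBcard, hBF, hBcost⟩ := hdec (Xhat \ A) d hd1 hd2
      have hBX : B ⊆ Xhat := hBsub.trans Finset.sdiff_subset
      have hdisj : Disjoint A B :=
        (Finset.sdiff_disjoint.mono_left hBsub).symm
      have hcardU : (A ∪ B).card = A.card + B.card :=
        Finset.card_union_of_disjoint hdisj
      have hFU : P.Feas (A ∪ B) (T ∪ TB) := P.feas_union A T B TB hF hBF
      have hAUX : A ∪ B ⊆ Xhat := Finset.union_subset hAX hBX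
      -- new deficit bound
      have hnew : ((i - (A ∪ B).card : ℕ) : ℝ) < (γ / (γ - 1)) ^ n := by
        by_cases hle2 : i ≤ (A ∪ B).card
        · have : i - (A ∪ B).card = 0 := by omega
          rw [this]
          exact_mod_cast pow_pos (by linarith : (0:ℝ) < γ / (γ - 1)) n
        · push_neg at hle2
          have hcast : ((i - (A ∪ B).card : ℕ) : ℝ) = (d : ℝ) - (B.card : ℝ) := by
            rw [hcardU] at hle2 ⊢
            have : i - (A.card + B.card) = d - B.card := by omega
            rw [this]
            have hBd : B.card ≤ d := by omega
            push_cast [Nat.cast_sub hBd]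
            ring
          rw [hcast]
          have h1 : (d : ℝ) - (B.card : ℝ) ≤ (d : ℝ) * (1 - 1/γ) := by
            have : (d:ℝ)/γ ≤ (B.card : ℝ) := hBcard
            have h2 : (d:ℝ) * (1 - 1/γ) = (d:ℝ) - (d:ℝ)/γ := by ring
            linarith
          have h3 : (d : ℝ) * (1 - 1/γ) < (γ / (γ - 1)) ^ (n+1) * (1 - 1/γ) := by
            apply mul_lt_mul_of_pos_right hlt
            rw [sub_pos, div_lt_one hγ0]; linarith
          have h4 : (γ / (γ - 1)) ^ (n+1) * (1 - 1/γ) = (γ / (γ - 1)) ^ n := by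
            rw [pow_succ]
            field_simp
          linarith
      obtain ⟨A', T', hA'X, hi', hF', hcost'⟩ := ih (A ∪ B) (T ∪ TB) hAUX hFU hnew
      refine ⟨A', T', hA'X, hi', hF', ?_⟩
      have hunion := P.setCost_union_le' T TB
      have hmd : P.mCost (Xhat \ A) d ≤ P.mCost Xhat i := P.mCost_sdiff_le' hAX hi2
      have hBcost2 : P.setCost TB ≤ α * P.mCost Xhat i := by
        calc P.setCost TB ≤ α * P.mCost (Xhat \ A) d := hBcost
          _ ≤ α * P.mCost Xhat i := by
              apply mul_le_mul_of_nonneg_left hmd (by linarith)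
      push_cast
      push_cast at hcost'
      linarith

end CoveringProblem

theorem stmt3 :
    ∀ (X S : Type) [DecidableEq X] [Fintype S] [DecidableEq S]
      (P : CoveringProblem X S) (α γ : ℝ), 1 ≤ α → 1 ≤ γ → P.Decomposable α γ →
      ∀ (Xhat : Finset X) (i : ℕ), 1 ≤ i → i ≤ Xhat.card →
        ∃ (A : Finset X) (T : Finset S), A ⊆ Xhat ∧ i ≤ A.card ∧ P.Feas A T ∧
          P.setCost T ≤ gFun α γ Xhat.card * P.mCost Xhat i := by
  intro X S _ _ _ P α γ hα hγ hdec Xhat i hi1 hi2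
  by_cases hγ1 : γ = 1
  · subst hγ1
    obtain ⟨B, T, hBsub, hBcard, hBF, hBcost⟩ := hdec Xhat i hi1 hi2
    refine ⟨B, T, hBsub, ?_, hBF, ?_⟩
    · rw [div_one] at hBcard; exact_mod_cast hBcard
    · rw [gFun, if_pos rfl]; exact hBcost
  · have hγlt : 1 < γ := lt_of_le_of_ne hγ (Ne.symm hγ1)
    have hγ0 : 0 < γ := by linarith
    have hγm : 0 < γ - 1 := by linarith
    set β : ℝ := γ / (γ - 1) with hβdef
    have hβ : 1 < β := by rw [hβdef, lt_div_iff₀ hγm]; linarith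
    have hlogβ : 0 < Real.log β := Real.log_pos hβ
    have hi1' : (1:ℝ) ≤ (i:ℝ) := by exact_mod_cast hi1
    have hlogi : 0 ≤ Real.log i := Real.log_nonneg hi1'
    set n : ℕ := ⌊Real.log i / Real.log β⌋₊ with hn
    have hm : 0 ≤ α * P.mCost Xhat i :=
      mul_nonneg (by linarith) (P.mCost_nonneg' hi2)
    -- i < β ^ (n+1)
    have hipow : (i : ℝ) < β ^ (n + 1) := by
      have h1 : Real.log i / Real.log β < (n : ℝ) + 1 := Nat.lt_floor_add_one _
      have h2 : Real.log i < ((n:ℝ) + 1) * Real.log β := by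
        rw [div_lt_iff₀ hlogβ] at h1; exact h1
      have h3 : Real.log i < Real.log (β ^ (n+1)) := by
        rw [Real.log_pow]; push_cast; linarith
      have h4 := Real.exp_lt_exp.mpr h3
      rwa [Real.exp_log (by linarith : (0:ℝ) < (i:ℝ)),
        Real.exp_log (pow_pos (by linarith) _)] at h4
    -- first decomposition step
    obtain ⟨B, TB, hBsub, hBcard, hBF, hBcost⟩ := hdec Xhat i hi1 hi2
    have hdef : ((i - B.card : ℕ) : ℝ) < β ^ n := by
      by_cases hle : i ≤ B.card
      · have : i - B.card = 0 := by omega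
        rw [this]
        exact_mod_cast pow_pos (by linarith : (0:ℝ) < β) n
      · push_neg at hle
        have hcast : ((i - B.card : ℕ) : ℝ) = (i : ℝ) - (B.card : ℝ) := by
          push_cast [Nat.cast_sub (le_of_lt hle)]; ring
        rw [hcast]
        have h1 : (i : ℝ) - (B.card : ℝ) ≤ (i : ℝ) * (1 - 1/γ) := by
          have h2 : (i:ℝ) * (1 - 1/γ) = (i:ℝ) - (i:ℝ)/γ := by ring
          linarith [hBcard]
        have h3 : (i:ℝ) * (1 - 1/γ) < β ^ (n+1) * (1 - 1/γ) := by
          apply mul_lt_mul_of_pos_right hipow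
          rw [sub_pos, div_lt_one hγ0]; linarith
        have h4 : β ^ (n+1) * (1 - 1/γ) = β ^ n := by
          rw [hβdef, pow_succ]; field_simp
        linarith
    obtain ⟨A', T', hA'X, hi', hF', hcost'⟩ :=
      P.main_step hα hγlt hdec Xhat i hi2 n B TB hBsub hBF hdef
    refine ⟨A', T', hA'X, hi', hF', ?_⟩
    have hcost2 : P.setCost T' ≤ ((n:ℝ) + 1) * (α * P.mCost Xhat i) := by
      have := hBcost
      nlinarith [hcost']
    have hnle : (n : ℝ) ≤ Real.log i / Real.log β :=
      Nat.floor_le (by positivity)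
    have hlogle : Real.log i ≤ Real.log Xhat.card := by
      apply Real.log_le_log (by linarith)
      exact_mod_cast hi2
    have hfinal : ((n:ℝ) + 1) ≤ 1 + Real.log Xhat.card / Real.log β := by
      have : Real.log i / Real.log β ≤ Real.log Xhat.card / Real.log β := by
        gcongr
      linarith
    rw [gFun, if_neg hγ1]
    calc P.setCost T' ≤ ((n:ℝ) + 1) * (α * P.mCost Xhat i) := hcost2
      _ ≤ (1 + Real.log Xhat.card / Real.log β) * (α * P.mCost Xhat i) :=
          mul_le_mul_of_nonneg_right hfinal hm
      _ = α * (1 + Real.log Xhat.card / Real.log (γ / (γ - 1))) * P.mCost Xhat i := by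
          rw [hβdef]; ring
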